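/- Let p ≥ 3 be an odd integer, set e_p := exp(2πi/p) and e_p^w := exp(2πi w/p) for w ∈ ℂ. Then for every λ ∈ ℂ and every natural number m with (p−1)/2 ≤ m ≤ p−2: Σ_{n=0}^{p−1} ( e_p^{λ+2n+1} + e_p^{−(λ+2n+1)} − 2 ) · σ_m( e_p^{λ+2n+1}, e_p ) = 0. -/

import Mathlib

/-- `e_p := exp(2πi/p)`. -/
noncomputable def ep (p : ℕ) : ℂ :=
  Complex.exp (2 * Real.pi * Complex.I / p)

/-- `e_p^w := exp(2πi w / p)`. -/
noncomputable def epow (p : ℕ) (w : ℂ) : ℂ :=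
  Complex.exp (2 * Real.pi * Complex.I * w / p)

/-- `σ_m(x,ζ) = ∏_{i=1}^{m} (x + x⁻¹ − ζ^i − ζ^{−i})`. -/
noncomputable def sigma' (m : ℕ) (x ζ : ℂ) : ℂ :=
  ∏ i ∈ Finset.Icc 1 m, (x + x⁻¹ - ζ ^ i - (ζ ^ i)⁻¹)

/-- Evaluation at `ζ : ℂ` of the Gaussian binomial coefficient `[n choose k]_q ∈ ℤ[q]`,
defined by the `q`-Pascal recursion, agreeing with
`∏_{i=1}^{k} (1−q^{n−k+i})/(1−q^i)` for `k ≤ n` and with `0` for `k > n`. -/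
def qbinom : ℕ → ℕ → ℂ → ℂ
  | _, 0, _ => 1
  | 0, _ + 1, _ => 0
  | n + 1, k + 1, ζ => qbinom n k ζ + ζ ^ (k + 1) * qbinom n (k + 1) ζ

open Finset Polynomial in
theorem stmt10 (p : ℕ) (hp : 3 ≤ p) (hodd : Odd p) (lam : ℂ)
    (m : ℕ) (hm1 : (p - 1) / 2 ≤ m) (hm2 : m ≤ p - 2) :
    ∑ n ∈ Finset.range p,
        (epow p (lam + 2 * n + 1) + epow p (-(lam + 2 * n + 1)) - 2) *
          sigma' m (epow p (lam + 2 * n + 1)) (ep p) = 0 := by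
  obtain ⟨r, hr⟩ := hodd
  have hpm : p ≤ 2 * m + 1 := by omega
  have hmp : m + 2 ≤ p := by omega
  set ζ : ℂ := ep p with hζ
  have hprim : IsPrimitiveRoot ζ p := Complex.isPrimitiveRoot_exp p (by omega)
  have hζp : ζ ^ p = 1 := hprim.pow_eq_one
  have hζ0 : ζ ≠ 0 := by
    simp [hζ, ep, Complex.exp_ne_zero]
  set c : ℂ := epow p (lam + 1) with hc
  have hc0 : c ≠ 0 := Complex.exp_ne_zero _
  -- x_n = c * ζ^(2n)
  have hx : ∀ n : ℕ, epow p (lam + 2 * n + 1) = c * ζ ^ (2 * n) := by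
    intro n
    rw [hc, hζ, epow, epow, ep, ← Complex.exp_nat_mul, ← Complex.exp_add]
    congr 1
    push_cast
    ring
  -- inverse
  have hxinv : ∀ w : ℂ, epow p (-w) = (epow p w)⁻¹ := by
    intro w
    rw [epow, epow, ← Complex.exp_neg]
    congr 1
    ring
  -- geometric sum lemma
  have geom : ∀ u : ℂ, u ≠ 1 → u ^ p = 1 → ∑ n ∈ range p, u ^ n = 0 := by
    intro u hu hup
    rw [geom_sum_eq hu, hup, sub_self, zero_div]
  -- the polynomial G
  set G : ℂ[X] := (X - 1) * ∏ j ∈ Icc (p - m) m, (X - C (ζ ^ j)) with hG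
  have hGdeg : G.natDegree < m + 1 := by
    have h1 : (∏ j ∈ Icc (p - m) m, (X - C (ζ ^ j)) : ℂ[X]).natDegree ≤ m - 1 := by
      refine le_trans (Polynomial.natDegree_prod_le _ _) ?_
      have : ∀ j ∈ Icc (p - m) m, ((X : ℂ[X]) - C (ζ ^ j)).natDegree = 1 := fun j _ =>
        natDegree_X_sub_C _
      rw [Finset.sum_congr rfl this, Finset.sum_const, smul_eq_mul, mul_one,
        Nat.card_Icc]
      omega
    have h2 : ((X : ℂ[X]) - 1).natDegree ≤ 1 :=
      le_of_eq (by simpa using natDegree_X_sub_C (1 : ℂ))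
    calc G.natDegree ≤ ((X:ℂ[X]) - 1).natDegree + (∏ j ∈ Icc (p - m) m, (X - C (ζ ^ j)) : ℂ[X]).natDegree := natDegree_mul_le
      _ < m + 1 := by omega
  -- pointwise identity
  have key : ∀ n ∈ range p,
      (epow p (lam + 2 * n + 1) + epow p (-(lam + 2 * n + 1)) - 2) *
          sigma' m (epow p (lam + 2 * n + 1)) ζ
        = (c ^ p - 1) * ((c * ζ ^ (2 * n)) ^ (m + 1))⁻¹ * G.eval (c * ζ ^ (2 * n)) := by
    intro n _
    rw [hxinv, hx]
    set x : ℂ := c * ζ ^ (2 * n) with hxd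
    have hx0 : x ≠ 0 := mul_ne_zero hc0 (pow_ne_zero _ hζ0)
    have hxp : x ^ p = c ^ p := by
      rw [hxd, mul_pow, ← pow_mul, mul_comm (2 * n) p, pow_mul, hζp, one_pow, mul_one]
    -- step a: sigma'
    have hsig : sigma' m x ζ = (x ^ m)⁻¹ * ∏ i ∈ Icc 1 m, ((x - ζ ^ i) * (x - ζ ^ (p - i))) := by
      rw [sigma']
      have hfac : ∀ i ∈ Icc 1 m,
          x + x⁻¹ - ζ ^ i - (ζ ^ i)⁻¹ = x⁻¹ * ((x - ζ ^ i) * (x - ζ ^ (p - i))) := by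
        intro i hi
        simp only [mem_Icc] at hi
        have hzi : ζ ^ (p - i) = (ζ ^ i)⁻¹ := by
          have h1 : ζ ^ (p - i) * ζ ^ i = 1 := by
            rw [← pow_add]
            have h2 : p - i + i = p := by omega
            rw [h2, hζp]
          field_simp at h1 ⊢
          linear_combination h1
        rw [hzi]
        have hzi0 : (ζ : ℂ) ^ i ≠ 0 := pow_ne_zero _ hζ0
        field_simp
        ring
      rw [Finset.prod_congr rfl hfac, Finset.prod_mul_distrib, Finset.prod_const,
        Nat.card_Icc]
      simp [inv_pow]
    -- step c/d: reindex + union/inter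
    have hreidx : ∏ i ∈ Icc 1 m, ((x - ζ ^ i) * (x - ζ ^ (p - i)))
        = (∏ j ∈ Icc 1 (p - 1), (x - ζ ^ j)) * ∏ j ∈ Icc (p - m) m, (x - ζ ^ j) := by
      rw [Finset.prod_mul_distrib]
      have h2 : ∏ i ∈ Icc 1 m, (x - ζ ^ (p - i)) = ∏ j ∈ Icc (p - m) (p - 1), (x - ζ ^ j) := by
        refine Finset.prod_nbij' (fun i => p - i) (fun j => p - j) ?_ ?_ ?_ ?_ ?_
        · intro i hi; simp only [mem_Icc] at hi ⊢; omega
        · intro j hj; simp only [mem_Icc] at hj ⊢; omega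
        · intro i hi; simp only [mem_Icc] at hi; show p - (p - i) = i; omega
        · intro j hj; simp only [mem_Icc] at hj; show p - (p - j) = j; omega
        · intro i hi; rfl
      rw [h2]
      have hun : Icc 1 m ∪ Icc (p - m) (p - 1) = Icc 1 (p - 1) := by
        ext j; simp only [mem_union, mem_Icc]; omega
      have hin : Icc 1 m ∩ Icc (p - m) (p - 1) = Icc (p - m) m := by
        ext j; simp only [mem_inter, mem_Icc]; omega
      rw [← Finset.prod_union_inter, hun, hin]
    -- step e: cyclotomic-type factorization
    have hcyc : (x - 1) * ∏ j ∈ Icc 1 (p - 1), (x - ζ ^ j) = x ^ p - 1 := by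
      have hpoly := X_pow_sub_C_eq_prod hprim (n := p) (by omega) (one_pow p)
      have heq := congrArg (Polynomial.eval x) hpoly
      simp only [eval_sub, eval_pow, eval_X, eval_C, eval_prod, mul_one] at heq
      rw [heq]
      have hsplit : range p = insert 0 (Icc 1 (p - 1)) := by
        ext j; simp only [mem_range, mem_insert, mem_Icc]; omega
      rw [hsplit, Finset.prod_insert (by simp)]
      simp
    have hGeval : G.eval x = (x - 1) * ∏ j ∈ Icc (p - m) m, (x - ζ ^ j) := by
      simp [hG, eval_prod]
    rw [hsig, hreidx, hGeval]
    have hfirst : x + x⁻¹ - 2 = x⁻¹ * (x - 1) ^ 2 := by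
      field_simp
      ring
    rw [hfirst]
    have hxm1 : ((x ^ (m + 1))⁻¹ : ℂ) = x⁻¹ * (x ^ m)⁻¹ := by
      rw [pow_succ, mul_inv, mul_comm]
    rw [hxm1, ← hxp, ← hcyc]
    ring
  rw [Finset.sum_congr rfl key]
  -- expand G.eval via coefficients and swap sums
  have hev : ∀ x : ℂ, G.eval x = ∑ k ∈ range (m + 1), G.coeff k * x ^ k :=
    fun x => eval_eq_sum_range' hGdeg x
  calc ∑ n ∈ range p, (c ^ p - 1) * ((c * ζ ^ (2 * n)) ^ (m + 1))⁻¹ * G.eval (c * ζ ^ (2 * n))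
      = ∑ n ∈ range p, ∑ k ∈ range (m + 1),
          ((c ^ p - 1) * G.coeff k * (c ^ (m + 1 - k))⁻¹) * ((ζ ^ (2 * (m + 1 - k)))⁻¹) ^ n := by
        refine Finset.sum_congr rfl fun n _ => ?_
        rw [hev, Finset.mul_sum]
        refine Finset.sum_congr rfl fun k hk => ?_
        simp only [mem_range] at hk
        have hA : (c * ζ ^ (2 * n)) ≠ 0 := mul_ne_zero hc0 (pow_ne_zero _ hζ0)
        have e1 : ((c * ζ ^ (2 * n)) ^ (m + 1))⁻¹ * (c * ζ ^ (2 * n)) ^ k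
            = (c ^ (m + 1 - k))⁻¹ * ((ζ ^ (2 * (m + 1 - k)))⁻¹) ^ n := by
          have h1 : (c * ζ ^ (2 * n)) ^ (m + 1)
              = (c * ζ ^ (2 * n)) ^ (m + 1 - k) * (c * ζ ^ (2 * n)) ^ k := by
            rw [← pow_add]; congr 1; omega
          have h2 : (ζ ^ (2 * n)) ^ (m + 1 - k) = (ζ ^ (2 * (m + 1 - k))) ^ n := by
            rw [← pow_mul, ← pow_mul]; congr 1; ring
          rw [h1, mul_inv, mul_assoc, inv_mul_cancel₀ (pow_ne_zero _ hA), mul_one,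
            mul_pow, h2, mul_inv]
          simp [inv_pow]
        calc (c ^ p - 1) * ((c * ζ ^ (2 * n)) ^ (m + 1))⁻¹ * (G.coeff k * (c * ζ ^ (2 * n)) ^ k)
            = (c ^ p - 1) * G.coeff k *
                (((c * ζ ^ (2 * n)) ^ (m + 1))⁻¹ * (c * ζ ^ (2 * n)) ^ k) := by ring
          _ = _ := by rw [e1]; ring
    _ = ∑ k ∈ range (m + 1), ∑ n ∈ range p,
          ((c ^ p - 1) * G.coeff k * (c ^ (m + 1 - k))⁻¹) * ((ζ ^ (2 * (m + 1 - k)))⁻¹) ^ n :=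
        Finset.sum_comm
    _ = 0 := by
        refine Finset.sum_eq_zero fun k hk => ?_
        simp only [mem_range] at hk
        have hnd : ¬ (p ∣ 2 * (m + 1 - k)) := by
          intro hdvd
          have hle := Nat.le_of_dvd (by omega) hdvd
          have h2 : p ∣ (2 * (m + 1 - k) - p) := Nat.dvd_sub hdvd dvd_rfl
          have h3 := Nat.eq_zero_of_dvd_of_lt h2 (by omega)
          omega
        have hne : ((ζ ^ (2 * (m + 1 - k)))⁻¹ : ℂ) ≠ 1 := by
          intro h
          exact hnd ((hprim.pow_eq_one_iff_dvd _).mp (inv_eq_one.mp h))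
        have hup : (((ζ ^ (2 * (m + 1 - k)))⁻¹ : ℂ)) ^ p = 1 := by
          rw [inv_pow, ← pow_mul, mul_comm, pow_mul, hζp, one_pow, inv_one]
        rw [← Finset.mul_sum, geom _ hne hup, mul_zero]
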